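/- Let F: ℝ → [0, ∞) be a locally integrable function, and suppose that (1/S)·∫_{-S}^{0} F(s) ds → 0 as S → ∞. Fix δ > 0 and R > 0. Then the Lebesgue measure of the set {s ∈ [−S, 0]: sup_{0 < r ≤ R} (1/(2r))·∫_{s−r}^{s+r} F(s') ds' > δ} divided by S tends to 0 as S → ∞. -/

import Mathlib

open Filter MeasureTheory

theorem stmt_13 (F : ℝ → ℝ) (hF0 : ∀ s, 0 ≤ F s)
    (hFloc : LocallyIntegrable F)
    (havg : Tendsto (fun S : ℝ => (1 / S) * ∫ s in Set.Icc (-S) 0, F s)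
      atTop (nhds 0))
    (δ R : ℝ) (hδ : 0 < δ) (hR : 0 < R) :
    Tendsto (fun S : ℝ =>
      (volume {s : ℝ | s ∈ Set.Icc (-S) 0 ∧
        ∃ r : ℝ, 0 < r ∧ r ≤ R ∧
          δ < (1 / (2 * r)) * ∫ s' in Set.Ioo (s - r) (s + r), F s'}).toReal / S)
      atTop (nhds 0) := by
  classical
  set ν := volume.withDensity (fun x => ENNReal.ofReal (F x)) with hν
  have hInt : ∀ a b : ℝ, IntegrableOn F (Set.Icc a b) :=
    fun a b => hFloc.integrableOn_isCompact isCompact_Icc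
  have hIntIoo : ∀ a b : ℝ, IntegrableOn F (Set.Ioo a b) :=
    fun a b => (hInt a b).mono_set Set.Ioo_subset_Icc_self
  have hνs : ∀ (s : Set ℝ), MeasurableSet s → IntegrableOn F s →
      ν s = ENNReal.ofReal (∫ x in s, F x) := by
    intro s hs hint
    rw [hν, withDensity_apply _ hs,
      ← ofReal_integral_eq_lintegral_ofReal hint (ae_of_all _ fun x => hF0 x)]
  have hint_nonneg : ∀ (s : Set ℝ), 0 ≤ ∫ x in s, F x := fun s =>
    integral_nonneg fun x => hF0 x
  -- the key weak-type estimate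
  have key : ∀ S : ℝ,
      volume {s : ℝ | s ∈ Set.Icc (-S) 0 ∧ ∃ r : ℝ, 0 < r ∧ r ≤ R ∧
          δ < (1 / (2 * r)) * ∫ s' in Set.Ioo (s - r) (s + r), F s'}
        ≤ ENNReal.ofReal (4 / δ) * ν (Set.Icc (-S - R) R) := by
    intro S
    set E := {s : ℝ | s ∈ Set.Icc (-S) 0 ∧ ∃ r : ℝ, 0 < r ∧ r ≤ R ∧
        δ < (1 / (2 * r)) * ∫ s' in Set.Ioo (s - r) (s + r), F s'} with hE
    have hrad : ∀ s ∈ E, ∃ r : ℝ, 0 < r ∧ r ≤ R ∧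
        δ < (1 / (2 * r)) * ∫ s' in Set.Ioo (s - r) (s + r), F s' := fun s hs => hs.2
    choose! rad hrad1 hrad2 hrad3 using hrad
    obtain ⟨u, hut, hdisj, hcov⟩ :=
      Vitali.exists_disjoint_subfamily_covering_enlargement_closedBall E id rad R
        (fun a ha => hrad2 a ha) 4 (by norm_num)
    simp only [id] at hdisj hcov
    have hucnt : u.Countable :=
      hdisj.countable_of_nonempty_interior fun b hb =>
        ⟨b, Metric.ball_subset_interior_closedBall (Metric.mem_ball_self (hrad1 b (hut hb)))⟩
    have hkey2 : ∀ b ∈ u,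
        ENNReal.ofReal (2 * δ * rad b) ≤ ν (Set.Ioo (b - rad b) (b + rad b)) := by
      intro b hb
      have hbE := hut hb
      have h1 := hrad1 b hbE
      have h3 := hrad3 b hbE
      have h2r : (0:ℝ) < 2 * rad b := by linarith
      rw [hνs _ measurableSet_Ioo (hIntIoo _ _)]
      refine ENNReal.ofReal_le_ofReal ?_
      have h4 : (2 * rad b) * δ < (2 * rad b) *
          ((1 / (2 * rad b)) * ∫ s' in Set.Ioo (b - rad b) (b + rad b), F s') :=
        mul_lt_mul_of_pos_left h3 h2r
      rw [← mul_assoc, mul_one_div, div_self (ne_of_gt h2r), one_mul] at h4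
      linarith
    have hcover : E ⊆ ⋃ b ∈ u, Metric.closedBall b (4 * rad b) := by
      intro a ha
      obtain ⟨b, hb, hsub⟩ := hcov a ha
      exact Set.mem_iUnion₂.2 ⟨b, hb, hsub (Metric.mem_closedBall_self (hrad1 a ha).le)⟩
    calc volume E ≤ volume (⋃ b ∈ u, Metric.closedBall b (4 * rad b)) := measure_mono hcover
      _ ≤ ∑' b : u, volume (Metric.closedBall (b : ℝ) (4 * rad b)) :=
          measure_biUnion_le volume hucnt _
      _ ≤ ∑' b : u, ENNReal.ofReal (4 / δ) * ν (Set.Ioo ((b : ℝ) - rad b) (b + rad b)) := by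
          refine ENNReal.tsum_le_tsum fun b => ?_
          rw [Real.volume_closedBall]
          calc ENNReal.ofReal (2 * (4 * rad b))
              = ENNReal.ofReal (4 / δ) * ENNReal.ofReal (2 * δ * rad b) := by
                rw [← ENNReal.ofReal_mul (by positivity)]
                congr 1
                field_simp
            _ ≤ _ := mul_le_mul_right (hkey2 b b.2) _
      _ = ENNReal.ofReal (4 / δ) * ∑' b : u, ν (Set.Ioo ((b : ℝ) - rad b) (b + rad b)) :=
          ENNReal.tsum_mul_left
      _ = ENNReal.ofReal (4 / δ) * ν (⋃ b ∈ u, Set.Ioo (b - rad b) (b + rad b)) := by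
          rw [measure_biUnion hucnt ?_ fun b _ => measurableSet_Ioo]
          refine hdisj.mono fun b => ?_
          dsimp only; rw [Real.closedBall_eq_Icc]
          exact Set.Ioo_subset_Icc_self
      _ ≤ ENNReal.ofReal (4 / δ) * ν (Set.Icc (-S - R) R) := by
          refine mul_le_mul_right (measure_mono ?_) _
          refine Set.iUnion₂_subset fun b hb => ?_
          have hbE := hut hb
          have h1 := hrad1 b hbE
          have h2 := hrad2 b hbE
          have hb1 : -S ≤ b := hbE.1.1
          have hb2 : b ≤ 0 := hbE.1.2
          refine Set.Ioo_subset_Icc_self.trans (Set.Icc_subset_Icc (by linarith) (by linarith))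
  -- finiteness / toReal estimate
  have hf_le : ∀ S : ℝ,
      (volume {s : ℝ | s ∈ Set.Icc (-S) 0 ∧ ∃ r : ℝ, 0 < r ∧ r ≤ R ∧
          δ < (1 / (2 * r)) * ∫ s' in Set.Ioo (s - r) (s + r), F s'}).toReal
        ≤ (4 / δ) * ∫ x in Set.Icc (-S - R) R, F x := by
    intro S
    have h := key S
    rw [hνs _ measurableSet_Icc (hInt _ _)] at h
    have h2 := ENNReal.toReal_mono
      (ENNReal.mul_ne_top ENNReal.ofReal_ne_top ENNReal.ofReal_ne_top) h
    rwa [ENNReal.toReal_mul, ENNReal.toReal_ofReal (by positivity),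
      ENNReal.toReal_ofReal (hint_nonneg _)] at h2
  -- splitting of the integral
  have hsplit : ∀ S : ℝ, 0 < S →
      ∫ x in Set.Icc (-S - R) R, F x
        = (∫ x in Set.Icc (-(S + R)) 0, F x) + ∫ x in (0:ℝ)..R, F x := by
    intro S hS
    have hab : (-S - R : ℝ) ≤ 0 := by nlinarith
    have hInt1 : IntervalIntegrable F volume (-S - R) 0 := by
      rw [intervalIntegrable_iff_integrableOn_Icc_of_le hab]; exact hInt _ _
    have hInt2 : IntervalIntegrable F volume 0 R := by
      rw [intervalIntegrable_iff_integrableOn_Icc_of_le hR.le]; exact hInt _ _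
    have hrw : (-(S + R) : ℝ) = -S - R := by ring
    rw [hrw, MeasureTheory.integral_Icc_eq_integral_Ioc,
      MeasureTheory.integral_Icc_eq_integral_Ioc,
      ← intervalIntegral.integral_of_le (by linarith : (-S - R : ℝ) ≤ R),
      ← intervalIntegral.integral_of_le hab,
      ← intervalIntegral.integral_add_adjacent_intervals hInt1 hInt2]
  -- the dominating function tends to zero
  have hupper : Tendsto (fun S : ℝ => (4 / δ) * ((∫ x in Set.Icc (-S - R) R, F x) / S))
      atTop (nhds 0) := by
    have t1 : Tendsto (fun S : ℝ => (1 / (S + R)) * ∫ x in Set.Icc (-(S + R)) 0, F x)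
        atTop (nhds 0) := havg.comp (tendsto_atTop_add_const_right atTop R tendsto_id)
    have t2 : Tendsto (fun S : ℝ => (S + R) / S) atTop (nhds 1) := by
      have h0 : Tendsto (fun S : ℝ => 1 + R / S) atTop (nhds (1 + 0)) :=
        tendsto_const_nhds.add (tendsto_const_nhds.div_atTop tendsto_id)
      rw [add_zero] at h0
      refine h0.congr' ?_
      filter_upwards [eventually_ne_atTop (0:ℝ)] with S hS
      field_simp
    have t4 : Tendsto (fun S : ℝ => (∫ x in (0:ℝ)..R, F x) / S) atTop (nhds 0) :=
      tendsto_const_nhds.div_atTop tendsto_id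
    have t3 : Tendsto (fun S : ℝ =>
        (4 / δ) * (((S + R) / S) * ((1 / (S + R)) * ∫ x in Set.Icc (-(S + R)) 0, F x)
          + (∫ x in (0:ℝ)..R, F x) / S)) atTop (nhds ((4 / δ) * (1 * 0 + 0))) :=
      ((t2.mul t1).add t4).const_mul _
    rw [mul_zero, zero_add, mul_zero] at t3
    refine t3.congr' ?_
    filter_upwards [eventually_gt_atTop (0:ℝ)] with S hS
    have hSR : (0:ℝ) < S + R := by linarith
    rw [hsplit S hS]
    congr 1
    field_simp
  -- squeeze
  refine tendsto_of_tendsto_of_tendsto_of_le_of_le' tendsto_const_nhds hupper ?_ ?_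
  · filter_upwards [eventually_gt_atTop (0:ℝ)] with S hS
    exact div_nonneg ENNReal.toReal_nonneg hS.le
  · filter_upwards [eventually_gt_atTop (0:ℝ)] with S hS
    rw [mul_div_assoc'] at *
    calc _ ≤ ((4 / δ) * ∫ x in Set.Icc (-S - R) R, F x) / S := by
          gcongr
          exact hf_le S
      _ = _ := by rw [mul_div_assoc]
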